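/- Let x, y be vertices of the tree T and for a, b ∈ X write c_{ab}(z) = ⟨c_z(x,y)δ_b, δ_a⟩. Then for all a, b ∈ X, either c_{ab}(z) = 0 for every z ∈ 𝔻, or there exist a sign ε ∈ {+1, −1} and a natural number ℓ ≤ 2 such that c_{ab}(z) = ε z^{d(a,b)} w^ℓ for every z ∈ 𝔻. -/

import Mathlib

noncomputable section

open scoped ComplexConjugate

/-- `ℓ²(X)`: the Hilbert space of square-summable complex functions on `X`. -/
abbrev ell2 (X : Type) : Type := lp (fun _ : X => ℂ) 2

/-- The Dirac function `δ_v` at a vertex `v`. -/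
noncomputable def delta {X : Type} [DecidableEq X] (v : X) : ell2 X :=
  lp.single 2 v (1 : ℂ)

/-- `w = √(1 − z²)`, using the principal branch of the square root, which is
holomorphic off the negative real axis and positive on the positive reals. -/
noncomputable def W (z : ℂ) : ℂ := (1 - z ^ 2) ^ ((1 : ℂ) / 2)

/-- The defining property of the edge operator `c_z(x,y)` for adjacent vertices
`x, y`: it sends `δ_x ↦ wδ_x − zδ_y`, `δ_y ↦ wδ_y + zδ_x`, and fixes `δ_v` for
every other vertex `v`. -/
def IsEdgeOp {X : Type} [DecidableEq X] (z : ℂ) (x y : X)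
    (A : ell2 X →L[ℂ] ell2 X) : Prop :=
  A (delta x) = W z • delta x - z • delta y ∧
  A (delta y) = W z • delta y + z • delta x ∧
  ∀ v : X, v ≠ x → v ≠ y → A (delta v) = delta v

/-- The product `f(v₀,v₁) * f(v₁,v₂) * ⋯ * f(v_{n−1},v_n)` along a walk
`v₀, v₁, …, v_n`. -/
def walkProd {X : Type} {T : SimpleGraph X} {E : Type} [Monoid E]
    (f : X → X → E) : {a b : X} → T.Walk a b → E
  | _, _, SimpleGraph.Walk.nil => 1
  | _, _, SimpleGraph.Walk.cons (u := u) (v := v) _ p => f u v * walkProd f p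

namespace MCFAux

variable {X : Type} [DecidableEq X]

lemma inner_delta (a : X) (f : ell2 X) : (inner ℂ (delta a) f : ℂ) = f a := by
  simp [delta, lp.inner_single_left]

lemma delta_apply (b a : X) : (delta b : ell2 X) a = if a = b then 1 else 0 := by
  by_cases h : a = b
  · subst h; simp [delta, lp.single_apply_self]
  · simp [delta, lp.single_apply_ne _ _ _ h, h]

lemma inner_delta_delta (a b : X) :
    (inner ℂ (delta a) (delta b) : ℂ) = if a = b then 1 else 0 := by
  rw [inner_delta, delta_apply]

lemma span_repr (s : Finset X) (v : ell2 X)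
    (hv : v ∈ Submodule.span ℂ (delta '' (s : Set X))) :
    v = ∑ w ∈ s, (inner ℂ (delta w) v : ℂ) • delta w := by
  induction hv using Submodule.span_induction with
  | mem x hx =>
    obtain ⟨y, hy, rfl⟩ := hx
    rw [Finset.sum_congr rfl (fun w _ => by rw [inner_delta_delta])]
    simp only [ite_smul, one_smul, zero_smul]
    rw [Finset.sum_ite_eq' s y (fun w => delta w),
      if_pos (show y ∈ s from hy)]
  | zero => simp
  | add u w hu hw ihu ihw =>
    rw [Finset.sum_congr rfl (fun t _ => by rw [inner_add_right, add_smul])]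
    rw [Finset.sum_add_distrib, ← ihu, ← ihw]
  | smul c u hu ihu =>
    rw [Finset.sum_congr rfl (fun t _ => by rw [inner_smul_right, mul_smul])]
    rw [← Finset.smul_sum, ← ihu]

open SimpleGraph in
lemma path_length_eq_dist {T : SimpleGraph X} (hconn : T.Connected)
    (hacyc : T.IsAcyclic) {a b : X} (p : T.Walk a b) (hp : p.IsPath) :
    p.length = T.dist a b := by
  obtain ⟨q, hq, hql⟩ := hconn.exists_path_of_dist a b
  have h := hacyc.path_unique ⟨p, hp⟩ ⟨q, hq⟩
  rw [← hql]
  exact congrArg Walk.length (congrArg Subtype.val h)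

open SimpleGraph in
lemma dist_succ {T : SimpleGraph X} (hconn : T.Connected) (hacyc : T.IsAcyclic)
    {u v₁ v b : X} (h : T.Adj u v₁) (q : T.Walk v₁ v) (hq : q.IsPath)
    (hu : u ∉ q.support) (hb : b ∈ q.support) :
    T.dist u b = T.dist v₁ b + 1 := by
  have hr : (q.takeUntil b hb).IsPath := hq.takeUntil hb
  have hru : u ∉ (q.takeUntil b hb).support :=
    fun hx => hu (Walk.support_takeUntil_subset q hb hx)
  have h1 := path_length_eq_dist hconn hacyc (Walk.cons h (q.takeUntil b hb)) (hr.cons hru)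
  have h2 := path_length_eq_dist hconn hacyc (q.takeUntil b hb) hr
  rw [Walk.length_cons, h2] at h1
  omega

open SimpleGraph in
lemma walkProd_fix {T : SimpleGraph X} {c : ℂ → X → X → (ell2 X →L[ℂ] ell2 X)}
    (hedge : ∀ z ∈ Metric.ball (0 : ℂ) 1, ∀ u v : X, T.Adj u v →
      IsEdgeOp z u v (c z u v))
    {z : ℂ} (hz : z ∈ Metric.ball (0 : ℂ) 1) {u v : X} (q : T.Walk u v) {b : X}
    (hb : b ∉ q.support) : walkProd (c z) q (delta b) = delta b := by
  induction q with
  | nil => simp [walkProd]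
  | @cons u v w h p ih =>
    rw [Walk.support_cons, List.mem_cons] at hb
    push_neg at hb
    have hbv : b ≠ v := fun hbv => hb.2 (hbv ▸ p.start_mem_support)
    show (c z u v * walkProd (c z) p) (delta b) = delta b
    rw [ContinuousLinearMap.mul_apply, ih hb.2]
    exact (hedge z hz u v h).2.2 b hb.1 hbv

lemma walkProd_nil {T : SimpleGraph X} {E : Type} [Monoid E] (f : X → X → E)
    {u : X} : walkProd f (SimpleGraph.Walk.nil : T.Walk u u) = 1 := rfl

lemma walkProd_cons {T : SimpleGraph X} {E : Type} [Monoid E] (f : X → X → E)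
    {u v w : X} (h : T.Adj u v) (p : T.Walk v w) :
    walkProd f (SimpleGraph.Walk.cons h p) = f u v * walkProd f p := rfl

open SimpleGraph in
lemma key {T : SimpleGraph X} (hconn : T.Connected) (hacyc : T.IsAcyclic)
    {c : ℂ → X → X → (ell2 X →L[ℂ] ell2 X)}
    (hedge : ∀ z ∈ Metric.ball (0 : ℂ) 1, ∀ u v : X, T.Adj u v →
      IsEdgeOp z u v (c z u v))
    {u v : X} (p : T.Walk u v) (b : X) (hp : p.IsPath) :
    (∀ z ∈ Metric.ball (0 : ℂ) 1,
      walkProd (c z) p (delta b) ∈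
        Submodule.span ℂ (delta '' ((insert b p.support.toFinset : Finset X) : Set X))) ∧
    (∀ a : X,
      (∀ z ∈ Metric.ball (0 : ℂ) 1,
        (inner ℂ (delta a) (walkProd (c z) p (delta b)) : ℂ) = 0) ∨
      (∃ ε : ℂ, (ε = 1 ∨ ε = -1) ∧ ∃ l : ℕ, l ≤ 2 ∧ ∀ z ∈ Metric.ball (0 : ℂ) 1,
        (inner ℂ (delta a) (walkProd (c z) p (delta b)) : ℂ)
          = ε * z ^ (T.dist a b) * W z ^ l)) ∧
    (b ∉ p.support → ∀ z ∈ Metric.ball (0 : ℂ) 1,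
      (inner ℂ (delta u) (walkProd (c z) p (delta b)) : ℂ) = 0) ∧
    (b ∈ p.support → b ≠ v → ∀ z ∈ Metric.ball (0 : ℂ) 1,
      (inner ℂ (delta u) (walkProd (c z) p (delta b)) : ℂ) = z ^ (T.dist u b) * W z) ∧
    (b = v → ∀ z ∈ Metric.ball (0 : ℂ) 1,
      (inner ℂ (delta u) (walkProd (c z) p (delta b)) : ℂ) = z ^ (T.dist u v)) := by
  induction p with
  | @nil u₀ =>
    simp only [walkProd_nil, ContinuousLinearMap.one_apply]
    refine ⟨?_, ?_, ?_, ?_, ?_⟩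
    · intro z hz
      exact Submodule.subset_span ⟨b, by simp, rfl⟩
    · intro a
      by_cases hab : a = b
      · subst hab
        right
        exact ⟨1, Or.inl rfl, 0, by norm_num, fun z hz => by
          rw [inner_delta_delta, if_pos rfl, SimpleGraph.dist_self]; ring⟩
      · left
        intro z hz
        rw [inner_delta_delta, if_neg hab]
    · intro hbs z hz
      have hbu : u₀ ≠ b := Ne.symm (by simpa [Walk.support_nil] using hbs)
      rw [inner_delta_delta, if_neg hbu]
    · intro hbs hbv
      exact absurd (by simpa [Walk.support_nil] using hbs) hbv
    · intro hbv z hz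
      subst hbv
      rw [inner_delta_delta, if_pos rfl, SimpleGraph.dist_self, pow_zero]
  | @cons u v₁ v h q ih =>
    rw [Walk.cons_isPath_iff] at hp
    obtain ⟨hq, hu⟩ := hp
    have huv₁ : u ≠ v₁ := h.ne
    have hv₁q : v₁ ∈ q.support := q.start_mem_support
    have hvq : v ∈ q.support := q.end_mem_support
    have huv : u ≠ v := fun e => hu (e ▸ hvq)
    have hdadj : T.dist v₁ u = 1 := SimpleGraph.dist_eq_one_iff_adj.mpr h.symm
    have hmemspan : ∀ a ∈ (insert b (Walk.cons h q).support.toFinset : Finset X),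
        delta a ∈ Submodule.span ℂ
          (delta '' ((insert b (Walk.cons h q).support.toFinset : Finset X) : Set X)) :=
      fun a ha => Submodule.subset_span ⟨a, ha, rfl⟩
    have humem : u ∈ (insert b (Walk.cons h q).support.toFinset : Finset X) := by
      simp [Walk.support_cons]
    have hv₁mem : v₁ ∈ (insert b (Walk.cons h q).support.toFinset : Finset X) := by
      simp [Walk.support_cons, Or.inr hv₁q]
    by_cases hbu : b = u
    · subst hbu
      have hfix : ∀ z ∈ Metric.ball (0:ℂ) 1,
          (walkProd (c z) (Walk.cons h q) (delta b) : ell2 X)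
            = W z • delta b - z • delta v₁ := by
        intro z hz
        show (c z b v₁ * walkProd (c z) q) (delta b) = _
        rw [ContinuousLinearMap.mul_apply, walkProd_fix hedge hz q hu]
        exact (hedge z hz b v₁ h).1
      refine ⟨?_, ?_, ?_, ?_, ?_⟩
      · intro z hz
        rw [hfix z hz]
        exact Submodule.sub_mem _ (Submodule.smul_mem _ _ (hmemspan _ humem))
          (Submodule.smul_mem _ _ (hmemspan _ hv₁mem))
      · intro a
        by_cases hab : a = b
        · subst hab
          right
          refine ⟨1, Or.inl rfl, 1, by norm_num, fun z hz => ?_⟩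
          rw [hfix z hz, inner_sub_right, inner_smul_right, inner_smul_right,
            inner_delta_delta, inner_delta_delta, if_pos rfl, if_neg huv₁,
            SimpleGraph.dist_self]
          ring
        · by_cases hav : a = v₁
          · subst hav
            right
            refine ⟨-1, Or.inr rfl, 0, by norm_num, fun z hz => ?_⟩
            rw [hfix z hz, inner_sub_right, inner_smul_right, inner_smul_right,
              inner_delta_delta, inner_delta_delta, if_neg hab, if_pos rfl, hdadj]
            ring
          · left
            intro z hz
            rw [hfix z hz, inner_sub_right, inner_smul_right, inner_smul_right,
              inner_delta_delta, inner_delta_delta, if_neg hab, if_neg hav]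
            ring
      · intro hbs
        exact absurd (by simp [Walk.support_cons] : b ∈ (Walk.cons h q).support) hbs
      · intro _ _ z hz
        rw [hfix z hz, inner_sub_right, inner_smul_right, inner_smul_right,
          inner_delta_delta, inner_delta_delta, if_pos rfl, if_neg huv₁,
          SimpleGraph.dist_self]
        ring
      · intro hbv
        exact absurd hbv huv
    · -- main case b ≠ u
      obtain ⟨Sq, Pq, S0q, S1q, S2q⟩ := ih hq
      set sq : Finset X := insert b q.support.toFinset with hsqdef
      have hv₁s : v₁ ∈ sq := by simp [hsqdef, Or.inr hv₁q]
      have hus : u ∉ sq := by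
        simp only [hsqdef, Finset.mem_insert, List.mem_toFinset]
        push_neg
        exact ⟨fun e => hbu e.symm, hu⟩
      have hEdelta : ∀ z ∈ Metric.ball (0:ℂ) 1, ∀ w ∈ sq,
          (c z u v₁) (delta w) =
            if w = v₁ then (W z • delta v₁ + z • delta u) else delta w := by
        intro z hz w hw
        by_cases hwv : w = v₁
        · rw [if_pos hwv, hwv]; exact (hedge z hz u v₁ h).2.1
        · rw [if_neg hwv]
          exact (hedge z hz u v₁ h).2.2 w (fun e => hus (e ▸ hw)) hwv
      have hrepr : ∀ z ∈ Metric.ball (0:ℂ) 1,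
          (walkProd (c z) (Walk.cons h q) (delta b) : ell2 X)
            = ∑ w ∈ sq, (inner ℂ (delta w) (walkProd (c z) q (delta b)) : ℂ)
              • (c z u v₁) (delta w) := by
        intro z hz
        show (c z u v₁ * walkProd (c z) q) (delta b) = _
        rw [ContinuousLinearMap.mul_apply]
        conv_lhs => rw [span_repr sq _ (Sq z hz)]
        rw [map_sum]
        exact Finset.sum_congr rfl fun w _ => by rw [map_smul]
      have hF : ∀ z ∈ Metric.ball (0:ℂ) 1, ∀ a : X,
          (inner ℂ (delta a) (walkProd (c z) (Walk.cons h q) (delta b)) : ℂ)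
            = (inner ℂ (delta v₁) (walkProd (c z) q (delta b)) : ℂ)
                * (W z * (if a = v₁ then 1 else 0) + z * (if a = u then 1 else 0))
              + ∑ w ∈ sq.erase v₁,
                (inner ℂ (delta w) (walkProd (c z) q (delta b)) : ℂ)
                  * (if a = w then 1 else 0) := by
        intro z hz a
        rw [hrepr z hz, inner_sum]
        simp_rw [inner_smul_right]
        rw [← Finset.add_sum_erase sq
          (fun w => (inner ℂ (delta w) (walkProd (c z) q (delta b)) : ℂ)
            * (inner ℂ (delta a) ((c z u v₁) (delta w)) : ℂ)) hv₁s]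
        congr 1
        · rw [hEdelta z hz v₁ hv₁s, if_pos rfl, inner_add_right, inner_smul_right,
            inner_smul_right, inner_delta_delta, inner_delta_delta]
        · refine Finset.sum_congr rfl fun w hw => ?_
          rw [hEdelta z hz w (Finset.mem_of_mem_erase hw),
            if_neg (Finset.ne_of_mem_erase hw), inner_delta_delta]
      have hFu : ∀ z ∈ Metric.ball (0:ℂ) 1,
          (inner ℂ (delta u) (walkProd (c z) (Walk.cons h q) (delta b)) : ℂ)
            = z * (inner ℂ (delta v₁) (walkProd (c z) q (delta b)) : ℂ) := by
        intro z hz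
        rw [hF z hz u, if_neg huv₁, if_pos rfl,
          Finset.sum_eq_zero (fun w hw => by
            rw [if_neg (fun e : u = w => hus (e ▸ Finset.mem_of_mem_erase hw)), mul_zero])]
        ring
      have hFv₁ : ∀ z ∈ Metric.ball (0:ℂ) 1,
          (inner ℂ (delta v₁) (walkProd (c z) (Walk.cons h q) (delta b)) : ℂ)
            = W z * (inner ℂ (delta v₁) (walkProd (c z) q (delta b)) : ℂ) := by
        intro z hz
        rw [hF z hz v₁, if_pos rfl, if_neg (Ne.symm huv₁),
          Finset.sum_eq_zero (fun w hw => by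
            rw [if_neg (fun e : v₁ = w => (Finset.ne_of_mem_erase hw) e.symm), mul_zero])]
        ring
      have hFgen : ∀ a : X, a ≠ u → a ≠ v₁ → ∀ z ∈ Metric.ball (0:ℂ) 1,
          (inner ℂ (delta a) (walkProd (c z) (Walk.cons h q) (delta b)) : ℂ)
            = if a ∈ sq.erase v₁
              then (inner ℂ (delta a) (walkProd (c z) q (delta b)) : ℂ) else 0 := by
        intro a hau hav z hz
        rw [hF z hz a, if_neg hav, if_neg hau]
        simp_rw [mul_ite, mul_one, mul_zero]
        rw [Finset.sum_ite_eq]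
        ring_nf
      have hsubset : ∀ w ∈ sq, w ∈ (insert b (Walk.cons h q).support.toFinset : Finset X) := by
        intro w hw
        simp only [hsqdef, Finset.mem_insert, List.mem_toFinset] at hw ⊢
        rcases hw with hw | hw
        · exact Or.inl hw
        · exact Or.inr (by rw [Walk.support_cons]; exact List.mem_cons_of_mem _ hw)
      have hspan : ∀ z ∈ Metric.ball (0:ℂ) 1,
          walkProd (c z) (Walk.cons h q) (delta b) ∈ Submodule.span ℂ
            (delta '' ((insert b (Walk.cons h q).support.toFinset : Finset X) : Set X)) := by
        intro z hz
        rw [hrepr z hz]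
        refine Submodule.sum_mem _ fun w hw => Submodule.smul_mem _ _ ?_
        rw [hEdelta z hz w hw]
        by_cases hwv : w = v₁
        · rw [if_pos hwv]
          exact Submodule.add_mem _ (Submodule.smul_mem _ _ (hmemspan _ hv₁mem))
            (Submodule.smul_mem _ _ (hmemspan _ humem))
        · rw [if_neg hwv]
          exact hmemspan _ (hsubset w hw)
      have hPgen : ∀ a : X, a ≠ u → a ≠ v₁ →
          ((∀ z ∈ Metric.ball (0 : ℂ) 1,
            (inner ℂ (delta a) (walkProd (c z) (Walk.cons h q) (delta b)) : ℂ) = 0) ∨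
          (∃ ε : ℂ, (ε = 1 ∨ ε = -1) ∧ ∃ l : ℕ, l ≤ 2 ∧ ∀ z ∈ Metric.ball (0 : ℂ) 1,
            (inner ℂ (delta a) (walkProd (c z) (Walk.cons h q) (delta b)) : ℂ)
              = ε * z ^ (T.dist a b) * W z ^ l)) := by
        intro a hau hav
        by_cases hae : a ∈ sq.erase v₁
        · rcases Pq a with h0 | ⟨ε, hε, l, hl, hform⟩
          · left; intro z hz; rw [hFgen a hau hav z hz, if_pos hae]; exact h0 z hz
          · right
            exact ⟨ε, hε, l, hl, fun z hz => by
              rw [hFgen a hau hav z hz, if_pos hae]; exact hform z hz⟩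
        · left; intro z hz; rw [hFgen a hau hav z hz, if_neg hae]
      have hbmem : b ∈ (Walk.cons h q).support → True := fun _ => trivial
      by_cases hbq : b ∈ q.support
      · by_cases hbv : b = v
        · subst hbv
          have hdv : T.dist u b = T.dist v₁ b + 1 := dist_succ hconn hacyc h q hq hu hvq
          have hval : ∀ z ∈ Metric.ball (0:ℂ) 1,
              (inner ℂ (delta v₁) (walkProd (c z) q (delta b)) : ℂ) = z ^ T.dist v₁ b :=
            fun z hz => S2q rfl z hz
          refine ⟨hspan, ?_, ?_, ?_, ?_⟩
          · intro a
            by_cases hau : a = u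
            · subst hau
              right
              refine ⟨1, Or.inl rfl, 0, by norm_num, fun z hz => ?_⟩
              rw [hFu z hz, hval z hz, hdv, pow_succ]; ring
            · by_cases hav : a = v₁
              · subst hav
                right
                refine ⟨1, Or.inl rfl, 1, by norm_num, fun z hz => ?_⟩
                rw [hFv₁ z hz, hval z hz]; ring
              · exact hPgen a hau hav
          · intro hbs
            exact absurd (by rw [Walk.support_cons]; exact List.mem_cons_of_mem _ hbq) hbs
          · intro _ hbv'; exact absurd rfl hbv'
          · intro _ z hz
            rw [hFu z hz, hval z hz, hdv, pow_succ]; ring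
        · have hdb : T.dist u b = T.dist v₁ b + 1 := dist_succ hconn hacyc h q hq hu hbq
          have hval : ∀ z ∈ Metric.ball (0:ℂ) 1,
              (inner ℂ (delta v₁) (walkProd (c z) q (delta b)) : ℂ)
                = z ^ T.dist v₁ b * W z :=
            fun z hz => S1q hbq hbv z hz
          refine ⟨hspan, ?_, ?_, ?_, ?_⟩
          · intro a
            by_cases hau : a = u
            · subst hau
              right
              refine ⟨1, Or.inl rfl, 1, by norm_num, fun z hz => ?_⟩
              rw [hFu z hz, hval z hz, hdb, pow_succ]; ring
            · by_cases hav : a = v₁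
              · subst hav
                right
                refine ⟨1, Or.inl rfl, 2, by norm_num, fun z hz => ?_⟩
                rw [hFv₁ z hz, hval z hz]; ring
              · exact hPgen a hau hav
          · intro hbs
            exact absurd (by rw [Walk.support_cons]; exact List.mem_cons_of_mem _ hbq) hbs
          · intro _ _ z hz
            rw [hFu z hz, hval z hz, hdb, pow_succ]; ring
          · intro hbv'; exact absurd hbv' hbv
      · have hval : ∀ z ∈ Metric.ball (0:ℂ) 1,
            (inner ℂ (delta v₁) (walkProd (c z) q (delta b)) : ℂ) = 0 :=
          fun z hz => S0q hbq z hz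
        have hbv : b ≠ v := fun e => hbq (e ▸ hvq)
        refine ⟨hspan, ?_, ?_, ?_, ?_⟩
        · intro a
          by_cases hau : a = u
          · subst hau
            left; intro z hz; rw [hFu z hz, hval z hz, mul_zero]
          · by_cases hav : a = v₁
            · subst hav
              left; intro z hz; rw [hFv₁ z hz, hval z hz, mul_zero]
            · exact hPgen a hau hav
        · intro hbs z hz
          rw [hFu z hz, hval z hz, mul_zero]
        · intro hbs hbv'
          rw [Walk.support_cons, List.mem_cons] at hbs
          rcases hbs with e | hbs'
          · exact absurd e hbu
          · exact absurd hbs' hbq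
        · intro e; exact absurd e hbv

end MCFAux

/-- Let `x, y` be vertices of the tree `T` and for `a, b ∈ X` write
`c_{ab}(z) = ⟨c_z(x,y)δ_b, δ_a⟩`.  Then for all `a, b ∈ X`, either `c_{ab}(z) = 0` for
every `z ∈ 𝔻`, or there exist a sign `ε ∈ {+1, −1}` and a natural number `ℓ ≤ 2` such
that `c_{ab}(z) = ε z^{d(a,b)} w^ℓ` for every `z ∈ 𝔻`. -/
theorem matrix_coefficient_form {X : Type} [DecidableEq X] (T : SimpleGraph X)
    (hconn : T.Connected) (hacyc : T.IsAcyclic)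
    (c : ℂ → X → X → (ell2 X →L[ℂ] ell2 X))
    (hedge : ∀ z ∈ Metric.ball (0 : ℂ) 1, ∀ u v : X, T.Adj u v →
      IsEdgeOp z u v (c z u v))
    (hgeo : ∀ z ∈ Metric.ball (0 : ℂ) 1, ∀ u v : X, ∀ p : T.Walk u v,
      p.length = T.dist u v → c z u v = walkProd (c z) p)
    (x y : X) (a b : X) :
    (∀ z ∈ Metric.ball (0 : ℂ) 1, (inner ℂ (delta a) (c z x y (delta b)) : ℂ) = 0) ∨
    (∃ ε : ℂ, (ε = 1 ∨ ε = -1) ∧ ∃ l : ℕ, l ≤ 2 ∧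
      ∀ z ∈ Metric.ball (0 : ℂ) 1,
        (inner ℂ (delta a) (c z x y (delta b)) : ℂ) = ε * z ^ (T.dist a b) * W z ^ l) := by
  obtain ⟨p, hp, hpl⟩ := hconn.exists_path_of_dist x y
  have hc : ∀ z ∈ Metric.ball (0 : ℂ) 1, c z x y = walkProd (c z) p :=
    fun z hz => hgeo z hz x y p hpl
  obtain ⟨_, P, _⟩ := MCFAux.key hconn hacyc hedge p b hp
  rcases P a with h0 | ⟨ε, hε, l, hl, hform⟩
  · left; intro z hz; rw [hc z hz]; exact h0 z hz
  · right
    exact ⟨ε, hε, l, hl, fun z hz => by rw [hc z hz]; exact hform z hz⟩
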